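/- Let N ≥ 1 and 1 ≤ β ≤ N be integers, and set λ_k := ⌈(k−β)/N⌉ + 1 for every integer k ≥ 1. For integers n ≥ 1 and t, let B_{t,n} := {(j_1,…,j_n) ∈ ℤ^n : 1 ≤ j_k ≤ t−λ_k for all 1 ≤ k ≤ n} and let S_n(t) denote the cardinality of the union ∪_σ σ(B_{t,n}) over all permutations σ of {1,…,n}, with the convention S_0(t) := 1. Then: (i) if 1 ≤ n ≤ β and t ≥ 1, S_n(t) = (t−1)^n; (ii) if n > β and t ≤ λ_n, S_n(t) = 0; (iii) if n > β and t > λ_n, then S_n(t) = Σ_{i=0}^{n−1} C(n,i)·S_i(λ_n)·(t−λ_n)^{n−i}, where C(n,i) is the binomial coefficient. -/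

import Mathlib

/-- `λ_k := ⌈(k-β)/N⌉ + 1`. -/
noncomputable def lam (N β k : ℤ) : ℤ := ⌈((k : ℚ) - (β : ℚ)) / (N : ℚ)⌉ + 1

/-- `S_n(t)`: the cardinality of the union `⋃_σ σ(B_{t,n})` over all permutations `σ`
of `{1,…,n}`, where `B_{t,n} = {j ∈ ℤ^n | 1 ≤ j_k ≤ t - λ_k for all 1 ≤ k ≤ n}`.
(For `n = 0` this is `1`, matching the convention `S_0(t) = 1`.) -/
noncomputable def Sfun (N β : ℤ) (n : ℕ) (t : ℤ) : ℕ :=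
  (⋃ σ : Equiv.Perm (Fin n), (fun j => j ∘ σ) ''
    {j : Fin n → ℤ | ∀ k : Fin n, 1 ≤ j k ∧ j k ≤ t - lam N β ((k.val : ℤ) + 1)}).ncard

/-- For integers `N ≥ 1`, `1 ≤ β ≤ N`:
(i) if `1 ≤ n ≤ β` and `t ≥ 1` then `S_n(t) = (t-1)^n`;
(ii) if `n > β` and `t ≤ λ_n` then `S_n(t) = 0`;
(iii) if `n > β` and `t > λ_n` then `S_n(t) = Σ_{i=0}^{n-1} C(n,i)·S_i(λ_n)·(t-λ_n)^{n-i}`. -/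
def Uset (N β : ℤ) (n : ℕ) (t : ℤ) : Set (Fin n → ℤ) :=
  ⋃ σ : Equiv.Perm (Fin n), (fun j => j ∘ σ) ''
    {j : Fin n → ℤ | ∀ k : Fin n, 1 ≤ j k ∧ j k ≤ t - lam N β ((k.val : ℤ) + 1)}

lemma Sfun_eq (N β : ℤ) (n : ℕ) (t : ℤ) : Sfun N β n t = (Uset N β n t).ncard := rfl

lemma mem_Uset_iff {N β : ℤ} {n : ℕ} {t : ℤ} {j : Fin n → ℤ} :
    j ∈ Uset N β n t ↔ ∃ σ : Equiv.Perm (Fin n),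
      ∀ k : Fin n, 1 ≤ j (σ k) ∧ j (σ k) ≤ t - lam N β ((k.val : ℤ) + 1) := by
  constructor
  · rintro h
    rw [Uset, Set.mem_iUnion] at h
    obtain ⟨σ, b, hb, hbj⟩ := h
    refine ⟨σ⁻¹, fun k => ?_⟩
    have : j (σ⁻¹ k) = b k := by
      rw [← hbj]; simp
    rw [this]; exact hb k
  · rintro ⟨σ, hσ⟩
    rw [Uset, Set.mem_iUnion]
    exact ⟨σ⁻¹, j ∘ ⇑σ, hσ, by funext m; simp⟩

lemma lam_mono (N β : ℤ) (hN : 1 ≤ N) : Monotone (lam N β) := by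
  intro a b hab
  unfold lam
  have hN' : (0 : ℚ) < (N : ℚ) := by exact_mod_cast hN
  have hab' : (a:ℚ) ≤ b := by exact_mod_cast hab
  gcongr

lemma one_le_lam {N β : ℤ} (hN : 1 ≤ N) (hβ2 : β ≤ N) {k : ℤ} (hk : 1 ≤ k) :
    1 ≤ lam N β k := by
  unfold lam
  have hN' : (0 : ℚ) < (N : ℚ) := by exact_mod_cast hN
  have : (0:ℤ) ≤ ⌈((k : ℚ) - (β : ℚ)) / (N : ℚ)⌉ := by
    rw [Int.le_ceil_iff]
    push_cast
    rw [lt_div_iff₀ hN']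
    have h1 : (1:ℚ) ≤ (k:ℚ) := by exact_mod_cast hk
    have h2 : (β:ℚ) ≤ (N:ℚ) := by exact_mod_cast hβ2
    nlinarith
  omega

lemma lam_eq_one {N β : ℤ} (hN : 1 ≤ N) (hβ2 : β ≤ N) {k : ℤ} (h1 : 1 ≤ k) (h2 : k ≤ β) :
    lam N β k = 1 := by
  unfold lam
  have hN' : (0 : ℚ) < (N : ℚ) := by exact_mod_cast hN
  have : ⌈((k : ℚ) - (β : ℚ)) / (N : ℚ)⌉ = 0 := by
    rw [Int.ceil_eq_zero_iff]
    have h1' : (1:ℚ) ≤ (k:ℚ) := by exact_mod_cast h1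
    have h2' : (k:ℚ) ≤ (β:ℚ) := by exact_mod_cast h2
    have h3' : (β:ℚ) ≤ (N:ℚ) := by exact_mod_cast hβ2
    rw [Set.mem_Ioc, lt_div_iff₀ hN', div_nonpos_iff]
    constructor
    · nlinarith
    · right; constructor <;> linarith
  omega

lemma Uset_bounds {N β : ℤ} (hN : 1 ≤ N) (hβ2 : β ≤ N) {n : ℕ} {t : ℤ} {j : Fin n → ℤ}
    (hj : j ∈ Uset N β n t) (m : Fin n) : 1 ≤ j m ∧ j m ≤ t - 1 := by
  obtain ⟨σ, hσ⟩ := mem_Uset_iff.mp hj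
  have h := hσ (σ⁻¹ m)
  rw [show σ (σ⁻¹ m) = m from σ.apply_symm_apply m] at h
  have : 1 ≤ lam N β (((σ⁻¹ m : Fin n).val : ℤ) + 1) := one_le_lam hN hβ2 (by omega)
  exact ⟨h.1, by omega⟩

lemma Uset_finite {N β : ℤ} (hN : 1 ≤ N) (hβ2 : β ≤ N) (n : ℕ) (t : ℤ) :
    (Uset N β n t).Finite := by
  apply Set.Finite.subset (Set.Finite.pi (fun _ : Fin n => Set.finite_Icc (1:ℤ) (t-1)))
  intro j hj
  rw [Set.mem_pi]
  intro m _
  exact Uset_bounds hN hβ2 hj m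

lemma ncard_pi_Icc {α : Type*} [Fintype α] [DecidableEq α] (c : ℤ) :
    (Set.pi Set.univ fun _ : α => Set.Icc (1:ℤ) c).ncard = c.toNat ^ Fintype.card α := by
  have : (Set.pi Set.univ fun _ : α => Set.Icc (1:ℤ) c)
      = ↑(Fintype.piFinset fun _ : α => Finset.Icc (1:ℤ) c) := by
    ext j
    simp [Set.mem_pi, Fintype.mem_piFinset]
  rw [this, Set.ncard_coe_finset, Fintype.card_piFinset]
  simp [Int.card_Icc]

lemma part_one {N β : ℤ} (hN : 1 ≤ N) (hβ1 : 1 ≤ β) (hβ2 : β ≤ N) {n : ℕ} (hn : 1 ≤ n)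
    {t : ℤ} (hnβ : (n : ℤ) ≤ β) (ht : 1 ≤ t) : (Sfun N β n t : ℤ) = (t - 1) ^ n := by
  classical
  have hU : Uset N β n t = Set.pi Set.univ fun _ : Fin n => Set.Icc (1:ℤ) (t-1) := by
    ext j
    constructor
    · intro hj
      rw [Set.mem_pi]
      intro m _
      exact Uset_bounds hN hβ2 hj m
    · intro hj
      rw [Set.mem_pi] at hj
      refine mem_Uset_iff.mpr ⟨1, fun k => ?_⟩
      have hk := hj k (Set.mem_univ _)
      rw [Set.mem_Icc] at hk
      have hl : lam N β ((k.val : ℤ) + 1) = 1 := by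
        apply lam_eq_one hN hβ2 (by omega)
        have : (k.val : ℤ) + 1 ≤ (n : ℤ) := by
          have := k.isLt; omega
        omega
      simpa [hl] using hk
  rw [Sfun_eq, hU, ncard_pi_Icc]
  simp only [Fintype.card_fin]
  push_cast [Int.toNat_of_nonneg (by omega : (0:ℤ) ≤ t - 1)]
  ring

lemma part_two {N β : ℤ} (hN : 1 ≤ N) (hβ1 : 1 ≤ β) (hβ2 : β ≤ N) {n : ℕ} (hn : 1 ≤ n)
    {t : ℤ} (ht : t ≤ lam N β (n : ℤ)) : Sfun N β n t = 0 := by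
  rw [Sfun_eq]
  have hemp : Uset N β n t = ∅ := by
    ext j
    simp only [Set.mem_empty_iff_false, iff_false]
    intro hj
    obtain ⟨σ, hσ⟩ := mem_Uset_iff.mp hj
    have hk : n - 1 < n := by omega
    have h := hσ ⟨n-1, hk⟩
    have hc : ((⟨n-1, hk⟩ : Fin n).val : ℤ) + 1 = (n : ℤ) := by
      simp; omega
    rw [hc] at h
    omega
  rw [hemp]
  exact Set.ncard_empty _

lemma fin_le_orderEmb {i n : ℕ} (g : Fin i ↪o Fin n) (r : Fin i) : (r : ℕ) ≤ (g r : ℕ) := by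
  suffices h : ∀ m : ℕ, ∀ hm : m < i, m ≤ ((g ⟨m, hm⟩ : Fin n) : ℕ) by
    simpa using h r.val r.isLt
  intro m
  induction m with
  | zero => intro hm; exact Nat.zero_le _
  | succ p ih =>
    intro hm
    have hp : p < i := by omega
    have h1 := ih hp
    have h2 : g ⟨p, hp⟩ < g ⟨p+1, hm⟩ := g.strictMono (by simp [Fin.lt_def])
    rw [Fin.lt_def] at h2
    omega

lemma small_mem {N β : ℤ} (hN : 1 ≤ N) (hβ2 : β ≤ N) {n : ℕ} {t t0 : ℤ}
    (ht0 : t0 = lam N β (n : ℤ)) {j : Fin n → ℤ} (hj : j ∈ Uset N β n t)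
    {A : Finset (Fin n)} (hA : ∀ m, m ∈ A ↔ t - t0 < j m) {i : ℕ} (hi : A.card = i)
    (e : Fin i ≃o {x // x ∈ A}) :
    (fun r : Fin i => j (e r).1 - (t - t0)) ∈ Uset N β i t0 := by
  classical
  obtain ⟨σ, hσ⟩ := mem_Uset_iff.mp hj
  set K : Finset (Fin n) := A.map σ.symm.toEmbedding with hKdef
  have hK : K.card = i := by rw [hKdef, Finset.card_map, hi]
  set f : Fin i ↪o Fin n := K.orderEmbOfFin hK with hfdef
  have hfA : ∀ r, σ (f r) ∈ A := by
    intro r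
    have hmem : f r ∈ K := Finset.orderEmbOfFin_mem K hK r
    rw [hKdef, Finset.mem_map] at hmem
    obtain ⟨a, ha, hae⟩ := hmem
    have : σ (f r) = a := by
      rw [← hae]; simp
    rwa [this]
  set T : Fin i → Fin i := fun r => e.symm ⟨σ (f r), hfA r⟩ with hTdef
  have Tinj : Function.Injective T := by
    intro r1 r2 h
    rw [hTdef] at h
    have h2 := congrArg e h
    simp only [OrderIso.apply_symm_apply] at h2
    have h3 : σ (f r1) = σ (f r2) := congrArg Subtype.val h2
    exact f.injective (σ.injective h3)
  refine mem_Uset_iff.mpr ⟨Equiv.ofBijective T ((Finite.injective_iff_bijective).mp Tinj),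
    fun r => ?_⟩
  have hTr : (Equiv.ofBijective T ((Finite.injective_iff_bijective).mp Tinj)) r = T r := rfl
  have key : (e (T r)).1 = σ (f r) := by
    rw [hTdef]; simp
  simp only [hTr, key]
  have hb := hσ (f r)
  have hlow : t - t0 < j (σ (f r)) := (hA _).mp (hfA r)
  have hmono : lam N β ((r.val : ℤ) + 1) ≤ lam N β (((f r : Fin n).val : ℤ) + 1) := by
    apply lam_mono N β hN
    have := fin_le_orderEmb f r
    omega
  omega

lemma fiber_ncard {N β : ℤ} (hN : 1 ≤ N) (hβ2 : β ≤ N) {n : ℕ} {t t0 : ℤ}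
    (ht0 : t0 = lam N β (n : ℤ)) (ht : t0 < t) (A : Finset (Fin n)) :
    {j : Fin n → ℤ | j ∈ Uset N β n t ∧
        (Finset.univ.filter fun m => t - t0 < j m) = A}.ncard
      = Sfun N β A.card t0 * ((t - t0).toNat) ^ (n - A.card) := by
  classical
  set i := A.card with hidef
  have hAc : Aᶜ.card = n - i := by
    rw [Finset.card_compl, Fintype.card_fin]
  set e : Fin i ≃o {x // x ∈ A} := A.orderIsoOfFin rfl with hedef
  set e' : Fin (n - i) ≃o {x // x ∈ Aᶜ} := Aᶜ.orderIsoOfFin hAc with he'def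
  set fiber : Set (Fin n → ℤ) := {j : Fin n → ℤ | j ∈ Uset N β n t ∧
        (Finset.univ.filter fun m => t - t0 < j m) = A} with hfiberdef
  set Tgt : Set ((Fin i → ℤ) × ({x // x ∈ Aᶜ} → ℤ)) :=
    (Uset N β i t0) ×ˢ (Set.pi Set.univ fun _ : {x // x ∈ Aᶜ} => Set.Icc (1:ℤ) (t - t0))
    with hTgtdef
  set Φ : (Fin n → ℤ) → ((Fin i → ℤ) × ({x // x ∈ Aᶜ} → ℤ)) :=
    fun j => (fun r => j (e r).1 - (t - t0), fun m => j m.1) with hΦdef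
  have hbij : Set.BijOn Φ fiber Tgt := by
    refine ⟨?_, ?_, ?_⟩
    · -- MapsTo
      rintro j ⟨hj, hGj⟩
      have hA : ∀ m, m ∈ A ↔ t - t0 < j m := by
        intro m
        rw [← hGj]
        simp
      constructor
      · exact small_mem hN hβ2 ht0 hj hA hidef.symm e
      · rw [Set.mem_pi]
        intro m _
        show j m.1 ∈ Set.Icc (1:ℤ) (t - t0)
        rw [Set.mem_Icc]
        have h1 := (Uset_bounds hN hβ2 hj m.1).1
        have h2 : ¬ (t - t0 < j m.1) := by
          rw [← hA]
          have := m.2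
          simp only [Finset.mem_compl] at this
          exact this
        omega
    · -- InjOn
      rintro j1 ⟨hj1, hG1⟩ j2 ⟨hj2, hG2⟩ heq
      rw [hΦdef, Prod.ext_iff] at heq
      obtain ⟨hfst, hsnd⟩ := heq
      funext m
      by_cases hm : m ∈ A
      · have h1 := congrFun hfst (e.symm ⟨m, hm⟩)
        simp only at h1
        rw [OrderIso.apply_symm_apply] at h1
        simpa using h1
      · have hm' : m ∈ Aᶜ := Finset.mem_compl.mpr hm
        exact congrFun hsnd ⟨m, hm'⟩
    · -- SurjOn
      rintro ⟨u, v⟩ ⟨hu, hv⟩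
      rw [Set.mem_pi] at hv
      set j : Fin n → ℤ := fun m =>
        if h : m ∈ A then u (e.symm ⟨m, h⟩) + (t - t0) else v ⟨m, Finset.mem_compl.mpr h⟩
        with hjdef
      have ja : ∀ m (h : m ∈ A), j m = u (e.symm ⟨m, h⟩) + (t - t0) := by
        intro m h; rw [hjdef]; simp [h]
      have jb : ∀ m (h : m ∉ A), j m = v ⟨m, Finset.mem_compl.mpr h⟩ := by
        intro m h; rw [hjdef]; simp [h]
      have ubd : ∀ r, 1 ≤ u r ∧ u r ≤ t0 - 1 := Uset_bounds hN hβ2 hu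
      have vbd : ∀ m, 1 ≤ v m ∧ v m ≤ t - t0 := by
        intro m
        have := hv m (Set.mem_univ _)
        rwa [Set.mem_Icc] at this
      have hGj : (Finset.univ.filter fun m => t - t0 < j m) = A := by
        ext m
        simp only [Finset.mem_filter, Finset.mem_univ, true_and]
        constructor
        · intro hlt
          by_contra hm
          rw [jb m hm] at hlt
          have := (vbd ⟨m, Finset.mem_compl.mpr hm⟩).2
          omega
        · intro hm
          rw [ja m hm]
          have := (ubd (e.symm ⟨m, hm⟩)).1
          omega
      have hjU : j ∈ Uset N β n t := by
        obtain ⟨τ, hτ⟩ := mem_Uset_iff.mp hu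
        set F : Fin n → Fin n := fun k =>
          if h : k.val < i then (e (τ ⟨k.val, h⟩)).1
          else (e' ⟨k.val - i, by have := k.isLt; omega⟩).1 with hFdef
        have hFmemA : ∀ k (h : k.val < i), F k ∈ A := by
          intro k h; rw [hFdef]; simp only [h, dif_pos]; exact (e (τ ⟨k.val, h⟩)).2
        have hFmemAc : ∀ k (h : ¬ k.val < i), F k ∈ Aᶜ := by
          intro k h; rw [hFdef]; simp only [h, dif_neg, not_false_iff]
          exact (e' ⟨k.val - i, by have := k.isLt; omega⟩).2
        have Finj : Function.Injective F := by
          intro k1 k2 hF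
          by_cases h1 : k1.val < i <;> by_cases h2 : k2.val < i
          · rw [hFdef] at hF
            simp only [h1, h2, dif_pos] at hF
            have h4 : (⟨k1.val, h1⟩ : Fin i) = ⟨k2.val, h2⟩ :=
              τ.injective (e.injective (Subtype.ext hF))
            have h5 : k1.val = k2.val := by simpa using h4
            exact Fin.ext h5
          · exfalso
            have m1 := hFmemA k1 h1
            have m2 := hFmemAc k2 h2
            rw [hF] at m1
            rw [Finset.mem_compl] at m2
            exact m2 m1
          · exfalso
            have m1 := hFmemAc k1 h1
            have m2 := hFmemA k2 h2
            rw [hF] at m1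
            rw [Finset.mem_compl] at m1
            exact m1 m2
          · rw [hFdef] at hF
            simp only [h1, h2, dif_neg, not_false_iff] at hF
            have := e'.injective (Subtype.ext hF)
            have h3 : k1.val - i = k2.val - i := congrArg Fin.val this
            have := k1.isLt
            exact Fin.ext (by omega)
        refine mem_Uset_iff.mpr ⟨Equiv.ofBijective F ((Finite.injective_iff_bijective).mp Finj),
          fun k => ?_⟩
        have hFk : (Equiv.ofBijective F ((Finite.injective_iff_bijective).mp Finj)) k = F k := rfl
        rw [hFk]
        by_cases h : k.val < i
        · have hmem := hFmemA k h
          rw [ja _ hmem]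
          have hFeq : F k = (e (τ ⟨k.val, h⟩)).1 := by rw [hFdef]; simp [h]
          have : (⟨F k, hmem⟩ : {x // x ∈ A}) = e (τ ⟨k.val, h⟩) := Subtype.ext hFeq
          rw [this, OrderIso.symm_apply_apply]
          have hb := hτ ⟨k.val, h⟩
          simp only at hb
          omega
        · have hmem := hFmemAc k h
          rw [jb _ (Finset.mem_compl.mp hmem)]
          have hvb := vbd ⟨F k, hmem⟩
          have hlam : lam N β ((k.val : ℤ) + 1) ≤ t0 := by
            rw [ht0]
            apply lam_mono N β hN
            have := k.isLt
            omega
          constructor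
          · exact (le_trans hvb.1 (le_refl _))
          · have := hvb.2
            omega
      refine ⟨j, ⟨hjU, hGj⟩, ?_⟩
      rw [hΦdef, Prod.ext_iff]
      constructor
      · funext r
        simp only
        rw [ja _ (e r).2]
        simp
      · funext m
        simp only
        rw [jb _ (Finset.mem_compl.mp m.2)]
  have h1 : fiber.ncard = Tgt.ncard := by
    rw [← hbij.image_eq, Set.ncard_image_of_injOn hbij.injOn]
  rw [h1, hTgtdef, ← Nat.card_coe_set_eq]
  rw [Nat.card_congr (Equiv.Set.prod _ _), Nat.card_prod]
  rw [Nat.card_coe_set_eq, Nat.card_coe_set_eq]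
  rw [ncard_pi_Icc, Fintype.card_coe, hAc, Sfun_eq]

lemma part_three {N β : ℤ} (hN : 1 ≤ N) (hβ1 : 1 ≤ β) (hβ2 : β ≤ N) {n : ℕ} (hn : 1 ≤ n)
    {t : ℤ} (hβn : β < (n : ℤ)) (ht : lam N β (n : ℤ) < t) :
    (Sfun N β n t : ℤ) = ∑ i ∈ Finset.range n,
        (n.choose i : ℤ) * (Sfun N β i (lam N β (n : ℤ)) : ℤ)
          * (t - lam N β (n : ℤ)) ^ (n - i) := by
  classical
  set t0 := lam N β (n : ℤ) with ht0
  set g : ℕ → ℕ := fun c => Sfun N β c t0 * ((t - t0).toNat) ^ (n - c) with hgdef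
  have hfin := Uset_finite hN hβ2 n t
  have step1 : Sfun N β n t = ∑ A ∈ (Finset.univ : Finset (Finset (Fin n))),
      (hfin.toFinset.filter (fun j => (Finset.univ.filter fun m => t - t0 < j m) = A)).card := by
    rw [Sfun_eq, Set.ncard_eq_toFinset_card _ hfin]
    exact Finset.card_eq_sum_card_fiberwise (fun j _ => Finset.mem_univ _)
  have step2 : ∀ A : Finset (Fin n),
      (hfin.toFinset.filter (fun j => (Finset.univ.filter fun m => t - t0 < j m) = A)).card
        = g A.card := by
    intro A
    have hset : ↑(hfin.toFinset.filter
        (fun j => (Finset.univ.filter fun m => t - t0 < j m) = A))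
        = {j : Fin n → ℤ | j ∈ Uset N β n t ∧
            (Finset.univ.filter fun m => t - t0 < j m) = A} := by
      ext j
      simp [Set.Finite.mem_toFinset]
    rw [hgdef]
    have := fiber_ncard hN hβ2 ht0 ht A
    rw [← hset, Set.ncard_coe_finset] at this
    exact this
  have hmaps : ∀ A : Finset (Fin n), A ∈ (Finset.univ : Finset (Finset (Fin n))) →
      A.card ∈ Finset.range (n+1) := by
    intro A _
    refine Finset.mem_range.mpr ?_
    have := Finset.card_le_univ A
    simp only [Finset.card_univ, Fintype.card_fin] at this
    exact Nat.lt_succ_of_le this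
  have step3 : Sfun N β n t = ∑ c ∈ Finset.range (n+1), n.choose c * g c := by
    rw [step1]
    simp_rw [step2]
    rw [← Finset.sum_fiberwise_of_maps_to hmaps (fun A => g A.card)]
    apply Finset.sum_congr rfl
    intro c _
    have hfilter : (Finset.univ.filter (fun A : Finset (Fin n) => A.card = c))
        = Finset.powersetCard c Finset.univ := by
      ext A
      simp [Finset.mem_powersetCard_univ]
    rw [Finset.sum_congr rfl (fun A hA => by
        rw [(Finset.mem_filter.mp hA).2]), Finset.sum_const, hfilter,
      Finset.card_powersetCard, Finset.card_univ, Fintype.card_fin, smul_eq_mul]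
  have hlast : g n = 0 := by
    rw [hgdef]
    simp only
    rw [part_two hN hβ1 hβ2 hn (le_refl t0)]
    ring
  have hzero : Sfun N β n t = ∑ c ∈ Finset.range n, n.choose c * g c := by
    rw [step3, Finset.sum_range_succ, hlast, Nat.mul_zero, Nat.add_zero]
  rw [hzero]
  push_cast [Int.toNat_of_nonneg (sub_nonneg.mpr (le_of_lt ht))]
  apply Finset.sum_congr rfl
  intro c _
  rw [hgdef]
  push_cast [Int.toNat_of_nonneg (sub_nonneg.mpr (le_of_lt ht))]
  ring


theorem stmt_14 (N β : ℤ) (hN : 1 ≤ N) (hβ1 : 1 ≤ β) (hβ2 : β ≤ N)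
    (n : ℕ) (hn : 1 ≤ n) (t : ℤ) :
    (((n : ℤ) ≤ β ∧ 1 ≤ t) → ((Sfun N β n t : ℤ) = (t - 1) ^ n)) ∧
    ((β < (n : ℤ) ∧ t ≤ lam N β (n : ℤ)) → Sfun N β n t = 0) ∧
    ((β < (n : ℤ) ∧ lam N β (n : ℤ) < t) →
      ((Sfun N β n t : ℤ) = ∑ i ∈ Finset.range n,
        (n.choose i : ℤ) * (Sfun N β i (lam N β (n : ℤ)) : ℤ)
          * (t - lam N β (n : ℤ)) ^ (n - i))) := by
  refine ⟨fun ⟨h1, h2⟩ => part_one hN hβ1 hβ2 hn h1 h2,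
    fun ⟨h1, h2⟩ => part_two hN hβ1 hβ2 hn h2,
    fun ⟨h1, h2⟩ => part_three hN hβ1 hβ2 hn h1 h2⟩
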